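/- arXiv:1407.4296 — 2 statements merged into one kernel-verified Lean document; each statement's English description precedes it below -/
import Mathlib

section
/- For the quadratic polynomial P(x,y) = U + p_x (x-x_j) + p_y (y-y_j) + (1/2) p_xx ((x-x_j)^2 - h^2/12) + (1/2) p_yy ((y-y_j)^2 - h^2/12) + p_xy (x-x_j)(y-y_j) on the square cell Ω_j = [x_j - h/2, x_j + h/2] × [y_j - h/2, y_j + h/2], the smoothness indicator β = Σ_{1 ≤ |α| ≤ 2} ∫_{Ω_j} h^{2(|α|-1)} (∂^α P)^2 dΩ equals h^2 p_x^2 + h^2 p_y^2 + (13/12) h^4 p_xx^2 + (7/6) h^4 p_xy^2 + (13/12) h^4 p_yy^2. -/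
/-- Partial derivative in the first variable. -/
noncomputable def pdx (f : ℝ → ℝ → ℝ) : ℝ → ℝ → ℝ := fun x y => deriv (fun t => f t y) x
/-- Partial derivative in the second variable. -/
noncomputable def pdy (f : ℝ → ℝ → ℝ) : ℝ → ℝ → ℝ := fun x y => deriv (fun t => f x t) y

lemma quad_int (a b c h : ℝ) :
    (∫ t in (c - h / 2)..(c + h / 2), (a + b * (t - c)) ^ 2)
      = a ^ 2 * h + b ^ 2 * h ^ 3 / 12 := by
  have hF : ∀ t : ℝ, HasDerivAt
      (fun t => a ^ 2 * (t - c) + a * b * (t - c) ^ 2 + b ^ 2 / 3 * (t - c) ^ 3)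
      ((a + b * (t - c)) ^ 2) t := by
    intro t
    have h1 : HasDerivAt (fun t : ℝ => t - c) 1 t := (hasDerivAt_id t).sub_const c
    have := ((h1.const_mul (a ^ 2)).add ((h1.pow 2).const_mul (a * b))).add
      ((h1.pow 3).const_mul (b ^ 2 / 3))
    refine this.congr_deriv ?_
    ring
  rw [intervalIntegral.integral_eq_sub_of_hasDerivAt (fun t _ => hF t)
    ((by fun_prop : Continuous fun t : ℝ => (a + b * (t - c)) ^ 2).intervalIntegrable _ _)]
  ring

lemma quad_int2 (a b c k e h : ℝ) :
    (∫ t in (c - h / 2)..(c + h / 2), ((a + b * (t - c)) ^ 2 * k + e))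
      = (a ^ 2 * h + b ^ 2 * h ^ 3 / 12) * k + e * h := by
  have hF : ∀ t : ℝ, HasDerivAt
      (fun t => (a ^ 2 * (t - c) + a * b * (t - c) ^ 2 + b ^ 2 / 3 * (t - c) ^ 3) * k + e * (t - c))
      ((a + b * (t - c)) ^ 2 * k + e) t := by
    intro t
    have h1 : HasDerivAt (fun t : ℝ => t - c) 1 t := (hasDerivAt_id t).sub_const c
    have := ((((h1.const_mul (a ^ 2)).add ((h1.pow 2).const_mul (a * b))).add
      ((h1.pow 3).const_mul (b ^ 2 / 3))).mul_const k).add (h1.const_mul e)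
    refine this.congr_deriv ?_
    ring
  rw [intervalIntegral.integral_eq_sub_of_hasDerivAt (fun t _ => hF t)
    ((by fun_prop : Continuous fun t : ℝ => (a + b * (t - c)) ^ 2 * k + e).intervalIntegrable _ _)]
  ring

lemma double_quad (a b c xc yc h : ℝ) :
    (∫ x in (xc - h / 2)..(xc + h / 2), ∫ y in (yc - h / 2)..(yc + h / 2),
        (a + b * (x - xc) + c * (y - yc)) ^ 2)
      = a ^ 2 * h ^ 2 + b ^ 2 * h ^ 4 / 12 + c ^ 2 * h ^ 4 / 12 := by
  simp_rw [quad_int, quad_int2]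
  ring

theorem smoothness_indicator_2d (xj yj h U px py pxx pxy pyy : ℝ) (hh : 0 < h)
    (P : ℝ → ℝ → ℝ)
    (hP : P = fun x y => U + px * (x - xj) + py * (y - yj)
      + (1 / 2) * pxx * ((x - xj) ^ 2 - h ^ 2 / 12)
      + (1 / 2) * pyy * ((y - yj) ^ 2 - h ^ 2 / 12)
      + pxy * (x - xj) * (y - yj)) :
    ((∫ x in (xj - h / 2)..(xj + h / 2), ∫ y in (yj - h / 2)..(yj + h / 2),
        h ^ (2 * (1 - 1)) * (pdx P x y) ^ 2)
      + (∫ x in (xj - h / 2)..(xj + h / 2), ∫ y in (yj - h / 2)..(yj + h / 2),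
        h ^ (2 * (1 - 1)) * (pdy P x y) ^ 2)
      + (∫ x in (xj - h / 2)..(xj + h / 2), ∫ y in (yj - h / 2)..(yj + h / 2),
        h ^ (2 * (2 - 1)) * (pdx (pdx P) x y) ^ 2)
      + (∫ x in (xj - h / 2)..(xj + h / 2), ∫ y in (yj - h / 2)..(yj + h / 2),
        h ^ (2 * (2 - 1)) * (pdy (pdx P) x y) ^ 2)
      + (∫ x in (xj - h / 2)..(xj + h / 2), ∫ y in (yj - h / 2)..(yj + h / 2),
        h ^ (2 * (2 - 1)) * (pdy (pdy P) x y) ^ 2))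
    = h ^ 2 * px ^ 2 + h ^ 2 * py ^ 2 + (13 / 12) * h ^ 4 * pxx ^ 2
      + (7 / 6) * h ^ 4 * pxy ^ 2 + (13 / 12) * h ^ 4 * pyy ^ 2 := by
  have hdx : pdx P = fun x y => px + pxx * (x - xj) + pxy * (y - yj) := by
    funext x y
    have h1 : HasDerivAt (fun t : ℝ => t - xj) 1 x := (hasDerivAt_id x).sub_const xj
    have key : HasDerivAt (fun t => P t y) (px + pxx * (x - xj) + pxy * (y - yj)) x := by
      rw [hP]
      have := (((((h1.const_mul px).const_add U).add_const (py * (y - yj))).add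
        (((h1.pow 2).sub_const (h ^ 2 / 12)).const_mul (1 / 2 * pxx))).add_const
        (1 / 2 * pyy * ((y - yj) ^ 2 - h ^ 2 / 12))).add ((h1.const_mul pxy).mul_const (y - yj))
      refine this.congr_deriv ?_
      ring
    exact key.deriv
  have hdy : pdy P = fun x y => py + pxy * (x - xj) + pyy * (y - yj) := by
    funext x y
    have h1 : HasDerivAt (fun t : ℝ => t - yj) 1 y := (hasDerivAt_id y).sub_const yj
    have key : HasDerivAt (fun t => P x t) (py + pxy * (x - xj) + pyy * (y - yj)) y := by
      rw [hP]
      have := ((((h1.const_mul py).const_add (U + px * (x - xj))).add_const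
        (1 / 2 * pxx * ((x - xj) ^ 2 - h ^ 2 / 12))).add
        (((h1.pow 2).sub_const (h ^ 2 / 12)).const_mul (1 / 2 * pyy))).add
        (h1.const_mul (pxy * (x - xj)))
      refine this.congr_deriv ?_
      ring
    exact key.deriv
  have hdxx : pdx (fun x y => px + pxx * (x - xj) + pxy * (y - yj)) = fun _ _ => pxx := by
    funext x y
    have h1 : HasDerivAt (fun t : ℝ => t - xj) 1 x := (hasDerivAt_id x).sub_const xj
    have key : HasDerivAt (fun t : ℝ => px + pxx * (t - xj) + pxy * (y - yj)) pxx x := by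
      have := ((h1.const_mul pxx).const_add px).add_const (pxy * (y - yj))
      refine this.congr_deriv ?_
      ring
    exact key.deriv
  have hdxy : pdy (fun x y => px + pxx * (x - xj) + pxy * (y - yj)) = fun _ _ => pxy := by
    funext x y
    have h1 : HasDerivAt (fun t : ℝ => t - yj) 1 y := (hasDerivAt_id y).sub_const yj
    have key : HasDerivAt (fun t : ℝ => px + pxx * (x - xj) + pxy * (t - yj)) pxy y := by
      have := (h1.const_mul pxy).const_add (px + pxx * (x - xj))
      refine this.congr_deriv ?_
      ring
    exact key.deriv
  have hdyy : pdy (fun x y => py + pxy * (x - xj) + pyy * (y - yj)) = fun _ _ => pyy := by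
    funext x y
    have h1 : HasDerivAt (fun t : ℝ => t - yj) 1 y := (hasDerivAt_id y).sub_const yj
    have key : HasDerivAt (fun t : ℝ => py + pxy * (x - xj) + pyy * (t - yj)) pyy y := by
      have := (h1.const_mul pyy).const_add (py + pxy * (x - xj))
      refine this.congr_deriv ?_
      ring
    exact key.deriv
  rw [hdx, hdy, hdxx, hdxy, hdyy]
  norm_num
  rw [double_quad, double_quad]
  ring
end

section
/- Let u : ℝ → ℝ be three times continuously differentiable. Fix x_j ∈ ℝ, h > 0, and cells Ω_{j-1} = [x_j - 3h/2, x_j - h/2], Ω_j = [x_j - h/2, x_j + h/2], Ω_{j+1} = [x_j + h/2, x_j + 3h/2]. Let P_OPT be the unique polynomial of degree ≤ 2 whose cell averages over the three cells agree with those of u. Then there is a constant C depending only on sup_{[x_j-3h/2, x_j+3h/2]} |u'''| such that |P_OPT(x) − u(x)| ≤ C h^3 for all x ∈ Ω_j. -/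
open intervalIntegral MeasureTheory in
lemma integral_quad (α β γ c a b : ℝ) :
    ∫ x in a..b, (α + β*(x-c) + γ*(x-c)^2) =
      (α*(b-c) + β*(b-c)^2/2 + γ*(b-c)^3/3)
        - (α*(a-c) + β*(a-c)^2/2 + γ*(a-c)^3/3) := by
  have hD : ∀ x : ℝ, HasDerivAt (fun x => α*(x-c) + β*(x-c)^2/2 + γ*(x-c)^3/3)
      (α + β*(x-c) + γ*(x-c)^2) x := by
    intro x
    have h1 : HasDerivAt (fun x : ℝ => x - c) 1 x := (hasDerivAt_id x).sub_const c
    have := ((h1.const_mul α).add ((((h1.pow 2)).const_mul (β/2)))).add ((h1.pow 3).const_mul (γ/3))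
    convert this using 1
    · rfl
    · rfl
    · funext y; simp only [Pi.add_apply, Pi.pow_apply]; ring
    · norm_num <;> ring
  rw [intervalIntegral.integral_eq_sub_of_hasDerivAt (fun x _ => hD x)
      ((Continuous.intervalIntegrable (by continuity) a b))]

lemma step_bound {f f' : ℝ → ℝ} (hf : ∀ x, HasDerivAt f (f' x) x)
    (hcont : Continuous f') {a b c K : ℝ} {n : ℕ} (hK : 0 ≤ K) (hmem : c ∈ Set.Icc a b)
    (hfc : f c = 0)
    (hb : ∀ x ∈ Set.Icc a b, |f' x| ≤ K * |x - c| ^ n) :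
    ∀ x ∈ Set.Icc a b, |f x| ≤ K * |x - c| ^ (n+1) / (n+1) := by
  intro x hx
  have hfx : f x = ∫ t in c..x, f' t := by
    rw [intervalIntegral.integral_eq_sub_of_hasDerivAt (fun t _ => hf t)
      (hcont.intervalIntegrable c x), hfc, sub_zero]
  rcases le_total c x with hcx | hcx
  · have h1 : |∫ t in c..x, f' t| ≤ ∫ t in c..x, |f' t| :=
      intervalIntegral.abs_integral_le_integral_abs hcx
    have h2 : ∫ t in c..x, |f' t| ≤ ∫ t in c..x, K * (t - c) ^ n := by
      apply intervalIntegral.integral_mono_on hcx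
        (hcont.abs.intervalIntegrable c x)
        (Continuous.intervalIntegrable (by continuity) c x)
      intro t ht
      have htab : t ∈ Set.Icc a b := ⟨le_trans hmem.1 ht.1, le_trans ht.2 hx.2⟩
      calc |f' t| ≤ K * |t - c| ^ n := hb t htab
        _ = K * (t - c) ^ n := by rw [abs_of_nonneg (by linarith [ht.1])]
    have h3 : ∫ t in c..x, K * (t - c) ^ n = K * (x - c)^(n+1) / (n+1) := by
      rw [intervalIntegral.integral_const_mul]
      have := intervalIntegral.integral_comp_sub_right (a := c) (b := x) (fun t => t ^ n) c
      rw [this]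
      simp [integral_pow]
      ring
    rw [hfx]
    calc |∫ t in c..x, f' t| ≤ K * (x - c)^(n+1)/(n+1) := by
          rw [← h3]; exact le_trans h1 h2
      _ = K * |x - c|^(n+1)/(n+1) := by rw [abs_of_nonneg (by linarith)]
  · have hswap : (∫ t in c..x, f' t) = -∫ t in x..c, f' t :=
      (intervalIntegral.integral_symm x c)
    have h1 : |∫ t in x..c, f' t| ≤ ∫ t in x..c, |f' t| :=
      intervalIntegral.abs_integral_le_integral_abs hcx
    have h2 : ∫ t in x..c, |f' t| ≤ ∫ t in x..c, K * (c - t) ^ n := by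
      apply intervalIntegral.integral_mono_on hcx
        (hcont.abs.intervalIntegrable x c)
        (Continuous.intervalIntegrable (by continuity) x c)
      intro t ht
      have htab : t ∈ Set.Icc a b := ⟨le_trans hx.1 ht.1, le_trans ht.2 hmem.2⟩
      calc |f' t| ≤ K * |t - c| ^ n := hb t htab
        _ = K * (c - t) ^ n := by rw [abs_of_nonpos (by linarith [ht.2]), neg_sub]
    have h3 : ∫ t in x..c, K * (c - t) ^ n = K * (c - x)^(n+1) / (n+1) := by
      rw [intervalIntegral.integral_const_mul]
      have := intervalIntegral.integral_comp_sub_left (a := x) (b := c) (fun t => t ^ n) c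
      rw [this]
      simp [integral_pow]
      ring
    rw [hfx, hswap, abs_neg]
    calc |∫ t in x..c, f' t| ≤ K * (c - x)^(n+1)/(n+1) := by
          rw [← h3]; exact le_trans h1 h2
      _ = K * |x - c|^(n+1)/(n+1) := by
          rw [abs_of_nonpos (by linarith), neg_sub]

lemma taylor3 {u : ℝ → ℝ} (hu : ContDiff ℝ 3 u) {a b c M : ℝ} (hmem : c ∈ Set.Icc a b)
    (hM : ∀ x ∈ Set.Icc a b, |iteratedDeriv 3 u x| ≤ M) :
    ∀ x ∈ Set.Icc a b,
      |u x - (u c + deriv u c * (x - c) + deriv (deriv u) c / 2 * (x - c)^2)|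
        ≤ M / 2 * |x - c| ^ 3 / 3 := by
  have hM0 : 0 ≤ M := le_trans (abs_nonneg _) (hM c hmem)
  have e1 : iteratedDeriv 1 u = deriv u := by
    simp [iteratedDeriv_succ, iteratedDeriv_zero]
  have e2 : iteratedDeriv 2 u = deriv (deriv u) := by
    simp [iteratedDeriv_succ, iteratedDeriv_zero]
  have hiter : iteratedDeriv 3 u = deriv (deriv (deriv u)) := by
    simp [iteratedDeriv_succ, iteratedDeriv_zero]
  have hud : Differentiable ℝ u := hu.differentiable (by norm_num)
  have hud2 : Differentiable ℝ (deriv u) := by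
    rw [← e1]; exact hu.differentiable_iteratedDeriv 1 (by norm_num)
  have hud3 : Differentiable ℝ (deriv (deriv u)) := by
    rw [← e2]; exact hu.differentiable_iteratedDeriv 2 (by norm_num)
  have hu0 : Continuous (deriv (deriv (deriv u))) := by
    rw [← hiter]; exact hu.continuous_iteratedDeriv 3 (by norm_num)
  set d1 := deriv u c with hd1
  set d2 := deriv (deriv u) c with hd2
  have B2 := step_bound (f := fun y => deriv (deriv u) y - d2)
      (f' := deriv (deriv (deriv u)))
      (fun x => ((hud3 x).hasDerivAt).sub_const d2) hu0 hM0 hmem (by simp [hd2])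
      (n := 0) (fun x hx => by simpa [← hiter] using hM x hx)
  norm_num at B2
  have B1 := step_bound (f := fun y => deriv u y - (d1 + d2 * (y - c)))
      (f' := fun y => deriv (deriv u) y - d2)
      (fun x => by
        have h := ((hud2 x).hasDerivAt).sub
          ((((hasDerivAt_id x).sub_const c).const_mul d2).const_add d1)
        simp at h; exact h)
      (hud3.continuous.sub continuous_const) hM0 hmem (by simp [hd1]) (n := 1)
      (fun x hx => by simpa using B2 x hx.1 hx.2)
  norm_num at B1
  have hM20 : 0 ≤ M / 2 := by linarith
  have B0 := step_bound (f := fun y => u y - (u c + d1 * (y - c) + d2 / 2 * (y - c)^2))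
      (f' := fun y => deriv u y - (d1 + d2 * (y - c)))
      (fun x => by
        have h1 : HasDerivAt (fun y : ℝ => y - c) 1 x := (hasDerivAt_id x).sub_const c
        have h := ((hud x).hasDerivAt).sub
          ((((h1.const_mul d1).const_add (u c))).add ((h1.pow 2).const_mul (d2/2)))
        convert h using 1
        · rfl
        · rfl
        · rfl
        show deriv u x - (d1 + d2 * (x - c)) = _
        push_cast
        ring)
      (hud2.continuous.sub (by continuity)) hM20 hmem (by simp) (n := 2)
      (fun x hx => by
        have h := B1 x hx.1 hx.2
        show |deriv u x - (d1 + d2 * (x - c))| ≤ M / 2 * |x - c|^2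
        rw [sq_abs]
        linarith)
  intro x hx
  have h := B0 x hx
  norm_num at h
  linarith [h]

set_option maxHeartbeats 1000000 in
theorem cweno_optimal_parabola_third_order :
    ∃ C : ℝ, 0 < C ∧ ∀ (u : ℝ → ℝ) (xj h M : ℝ) (P : Polynomial ℝ),
      ContDiff ℝ 3 u → 0 < h →
      (∀ x ∈ Set.Icc (xj - 3 * h / 2) (xj + 3 * h / 2), |iteratedDeriv 3 u x| ≤ M) →
      P.degree ≤ 2 →
      (1 / h) * (∫ x in (xj - 3 * h / 2)..(xj - h / 2), P.eval x)
        = (1 / h) * ∫ x in (xj - 3 * h / 2)..(xj - h / 2), u x →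
      (1 / h) * (∫ x in (xj - h / 2)..(xj + h / 2), P.eval x)
        = (1 / h) * ∫ x in (xj - h / 2)..(xj + h / 2), u x →
      (1 / h) * (∫ x in (xj + h / 2)..(xj + 3 * h / 2), P.eval x)
        = (1 / h) * ∫ x in (xj + h / 2)..(xj + 3 * h / 2), u x →
      ∀ x ∈ Set.Icc (xj - h / 2) (xj + h / 2), |P.eval x - u x| ≤ C * M * h ^ 3 := by
  refine ⟨2, by norm_num, ?_⟩
  intro u xj h M P hu hh hM hdeg H1 H2 H3
  have hmemc : xj ∈ Set.Icc (xj - 3 * h / 2) (xj + 3 * h / 2) := by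
    constructor <;> linarith
  have hM0 : 0 ≤ M := le_trans (abs_nonneg _) (hM xj hmemc)
  have B0 := taylor3 hu hmemc hM
  set d0 := u xj with hd0
  set d1 := deriv u xj with hd1
  set d2 := deriv (deriv u) xj with hd2
  -- explicit form of P
  have hnd : P.natDegree < 3 :=
    lt_of_le_of_lt (Polynomial.natDegree_le_iff_degree_le.mpr hdeg) (by norm_num)
  have heval : ∀ y : ℝ, P.eval y = P.coeff 0 + P.coeff 1 * y + P.coeff 2 * y^2 := by
    intro y
    rw [Polynomial.eval_eq_sum_range' hnd y]
    simp [Finset.sum_range_succ]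
  set α := (P.coeff 0 + P.coeff 1 * xj + P.coeff 2 * xj^2) - d0 with hα
  set β := (P.coeff 1 + 2 * P.coeff 2 * xj) - d1 with hβ
  set γ := P.coeff 2 - d2/2 with hγ
  have hQ : ∀ y : ℝ,
      P.eval y - (d0 + d1 * (y - xj) + d2/2 * (y - xj)^2)
        = α + β*(y-xj) + γ*(y-xj)^2 := by
    intro y; rw [heval y, hα, hβ, hγ]; ring
  have hTcont : Continuous (fun y : ℝ => d0 + d1 * (y - xj) + d2/2 * (y - xj)^2) := by
    continuity
  -- per-cell bound
  have cell : ∀ l r : ℝ, xj - 3 * h / 2 ≤ l → r ≤ xj + 3 * h / 2 → r - l = h →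
      ((1 / h) * (∫ x in l..r, P.eval x) = (1 / h) * ∫ x in l..r, u x) →
      |(α*(r-xj) + β*(r-xj)^2/2 + γ*(r-xj)^3/3)
        - (α*(l-xj) + β*(l-xj)^2/2 + γ*(l-xj)^3/3)| ≤ 9/16*M*h^3*h := by
    intro l r hl hr hlr Hcell
    have hlr' : l ≤ r := by linarith
    have hint : (∫ x in l..r, P.eval x) = ∫ x in l..r, u x :=
      mul_left_cancel₀ (one_div_ne_zero (ne_of_gt hh)) Hcell
    have e2 : ∫ x in l..r, (α + β*(x-xj) + γ*(x-xj)^2)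
        = ∫ x in l..r, (u x - (d0 + d1 * (x - xj) + d2/2 * (x - xj)^2)) := by
      calc ∫ x in l..r, (α + β*(x-xj) + γ*(x-xj)^2)
          = ∫ x in l..r, (P.eval x - (d0 + d1 * (x - xj) + d2/2 * (x - xj)^2)) :=
            intervalIntegral.integral_congr (fun y _ => (hQ y).symm)
        _ = (∫ x in l..r, P.eval x)
              - ∫ x in l..r, (d0 + d1 * (x - xj) + d2/2 * (x - xj)^2) :=
            intervalIntegral.integral_sub (P.continuous.intervalIntegrable l r)
              (hTcont.intervalIntegrable l r)
        _ = (∫ x in l..r, u x)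
              - ∫ x in l..r, (d0 + d1 * (x - xj) + d2/2 * (x - xj)^2) := by rw [hint]
        _ = ∫ x in l..r, (u x - (d0 + d1 * (x - xj) + d2/2 * (x - xj)^2)) :=
            (intervalIntegral.integral_sub (hu.continuous.intervalIntegrable l r)
              (hTcont.intervalIntegrable l r)).symm
    rw [integral_quad] at e2
    rw [e2]
    have hbnd : ∀ y ∈ Set.uIoc l r,
        ‖u y - (d0 + d1 * (y - xj) + d2/2 * (y - xj)^2)‖ ≤ 9/16*M*h^3 := by
      intro y hy
      rw [Set.uIoc_of_le hlr'] at hy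
      have hys : y ∈ Set.Icc (xj - 3 * h / 2) (xj + 3 * h / 2) :=
        ⟨by linarith [hy.1], by linarith [hy.2]⟩
      have hb := B0 y hys
      have habs : |y - xj| ≤ 3*h/2 := by
        rw [abs_le]; constructor <;> [linarith [hys.1]; linarith [hys.2]]
      have hcube : |y - xj|^3 ≤ (3*h/2)^3 :=
        pow_le_pow_left₀ (abs_nonneg _) habs 3
      have : M / 2 * |y - xj| ^ 3 / 3 ≤ 9/16*M*h^3 := by
        have := mul_le_mul_of_nonneg_left hcube hM0
        linarith
      calc ‖u y - (d0 + d1 * (y - xj) + d2/2 * (y - xj)^2)‖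
          ≤ M / 2 * |y - xj| ^ 3 / 3 := hb
        _ ≤ 9/16*M*h^3 := this
    have := intervalIntegral.norm_integral_le_of_norm_le_const hbnd
    rw [show |r - l| = h by rw [hlr]; exact abs_of_pos hh] at this
    exact this
  -- three cells
  have Y1 := cell (xj - 3 * h / 2) (xj - h / 2) (by linarith) (by linarith) (by ring) H1
  have Y2 := cell (xj - h / 2) (xj + h / 2) (by linarith) (by linarith) (by ring) H2
  have Y3 := cell (xj + h / 2) (xj + 3 * h / 2) (by linarith) (by linarith) (by ring) H3
  have E1 : |α*h - β*h^2 + 13/12*γ*h^3| ≤ 9/16*M*h^3*h := by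
    have e : α*h - β*h^2 + 13/12*γ*h^3
        = (α*((xj - h / 2)-xj) + β*((xj - h / 2)-xj)^2/2 + γ*((xj - h / 2)-xj)^3/3)
          - (α*((xj - 3 * h / 2)-xj) + β*((xj - 3 * h / 2)-xj)^2/2
              + γ*((xj - 3 * h / 2)-xj)^3/3) := by ring
    rw [e]; exact Y1
  have E2 : |α*h + γ*h^3/12| ≤ 9/16*M*h^3*h := by
    have e : α*h + γ*h^3/12
        = (α*((xj + h / 2)-xj) + β*((xj + h / 2)-xj)^2/2 + γ*((xj + h / 2)-xj)^3/3)
          - (α*((xj - h / 2)-xj) + β*((xj - h / 2)-xj)^2/2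
              + γ*((xj - h / 2)-xj)^3/3) := by ring
    rw [e]; exact Y2
  have E3 : |α*h + β*h^2 + 13/12*γ*h^3| ≤ 9/16*M*h^3*h := by
    have e : α*h + β*h^2 + 13/12*γ*h^3
        = (α*((xj + 3 * h / 2)-xj) + β*((xj + 3 * h / 2)-xj)^2/2
              + γ*((xj + 3 * h / 2)-xj)^3/3)
          - (α*((xj + h / 2)-xj) + β*((xj + h / 2)-xj)^2/2
              + γ*((xj + h / 2)-xj)^3/3) := by ring
    rw [e]; exact Y3
  -- extract coefficient bounds
  have A1 := abs_le.mp E1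
  have A2 := abs_le.mp E2
  have A3 := abs_le.mp E3
  have hβb : |β| * h^2 ≤ (9/16*M*h^2) * h^2 := by
    rcases abs_cases β with ⟨e, _⟩ | ⟨e, _⟩ <;> rw [e] <;>
      linarith [A1.1, A1.2, A3.1, A3.2]
  have hγb : |γ| * h^3 ≤ (9/8*M*h) * h^3 := by
    rcases abs_cases γ with ⟨e, _⟩ | ⟨e, _⟩ <;> rw [e] <;>
      linarith [A1.1, A1.2, A2.1, A2.2, A3.1, A3.2]
  have hαb : |α| * h ≤ (21/32*M*h^3) * h := by
    rcases abs_cases α with ⟨e, _⟩ | ⟨e, _⟩ <;> rw [e] <;>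
      linarith [A1.1, A1.2, A2.1, A2.2, A3.1, A3.2]
  have hβ' : |β| ≤ 9/16*M*h^2 :=
    le_of_mul_le_mul_right hβb (by positivity : (0:ℝ) < h^2)
  have hγ' : |γ| ≤ 9/8*M*h :=
    le_of_mul_le_mul_right hγb (by positivity : (0:ℝ) < h^3)
  have hα' : |α| ≤ 21/32*M*h^3 := le_of_mul_le_mul_right hαb hh
  -- final estimate
  intro x hx
  have hxs : x ∈ Set.Icc (xj - 3 * h / 2) (xj + 3 * h / 2) :=
    ⟨by linarith [hx.1], by linarith [hx.2]⟩
  have hrem := B0 x hxs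
  have ht : |x - xj| ≤ h/2 := by
    rw [abs_le]; constructor <;> [linarith [hx.1]; linarith [hx.2]]
  have ht0 : (0:ℝ) ≤ |x - xj| := abs_nonneg _
  have hsplit : |P.eval x - u x|
      ≤ |α + β*(x-xj) + γ*(x-xj)^2|
        + |u x - (d0 + d1 * (x - xj) + d2/2 * (x - xj)^2)| := by
    have e : P.eval x - u x
        = (α + β*(x-xj) + γ*(x-xj)^2)
          - (u x - (d0 + d1 * (x - xj) + d2/2 * (x - xj)^2)) := by
      rw [← hQ x]; ring
    rw [e]
    exact abs_sub _ _
  have htri : |α + β*(x-xj) + γ*(x-xj)^2|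
      ≤ |α| + |β| * |x-xj| + |γ| * |x-xj|^2 := by
    calc |α + β*(x-xj) + γ*(x-xj)^2|
        ≤ |α + β*(x-xj)| + |γ*(x-xj)^2| := abs_add_le _ _
      _ ≤ |α| + |β*(x-xj)| + |γ*(x-xj)^2| := by linarith [abs_add_le α (β*(x-xj))]
      _ = |α| + |β| * |x-xj| + |γ| * |x-xj|^2 := by
          rw [abs_mul, abs_mul, abs_pow]
  have hc2 : |x-xj|^2 ≤ (h/2)^2 := pow_le_pow_left₀ ht0 ht 2
  have hc3 : |x-xj|^3 ≤ (h/2)^3 := pow_le_pow_left₀ ht0 ht 3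
  have hb1 : |β| * |x-xj| ≤ (9/16*M*h^2) * (h/2) :=
    mul_le_mul hβ' ht ht0 (by positivity)
  have hb2 : |γ| * |x-xj|^2 ≤ (9/8*M*h) * (h/2)^2 :=
    mul_le_mul hγ' hc2 (by positivity) (by positivity)
  have hb3 : M / 2 * |x - xj| ^ 3 / 3 ≤ M / 2 * (h/2)^3 / 3 := by
    have := mul_le_mul_of_nonneg_left hc3 hM0
    linarith
  calc |P.eval x - u x|
      ≤ |α| + |β| * |x-xj| + |γ| * |x-xj|^2
        + |u x - (d0 + d1 * (x - xj) + d2/2 * (x - xj)^2)| := by linarith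
    _ ≤ 21/32*M*h^3 + (9/16*M*h^2) * (h/2) + (9/8*M*h) * (h/2)^2
        + M / 2 * (h/2)^3 / 3 := by linarith
    _ ≤ 2 * M * h^3 := by
        have h3p : 0 ≤ M * h^3 := by positivity
        linarith
end
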